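/- Let V be a homogeneous linear subspace of polynomials over a finite field F and R ∈ ℕ, and let V^↑ denote the homogeneous component of V of top degree deg(V) (the subspace of V consisting of 0 together with the forms in V of degree deg(V) = max_{X ∈ V} deg(X)). Then U_R(V) = V if and only if U_R(V^↑) = V^↑. -/

import Mathlib

open MvPolynomial
open scoped BigOperators

namespace PaperDefs

variable (F : Type) [Field F] [Fintype F] [DecidableEq F]

/-- A multivariate polynomial is *reduced* if every variable occurs with degree at most `|F| - 1`.
Over a finite field, every function `F^n → F` has a unique reduced polynomial representative. -/
def ReducedPoly {n : ℕ} (P : MvPolynomial (Fin n) F) : Prop :=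
  ∀ i, P.degreeOf i ≤ Fintype.card F - 1

/-- `P` represents the function `f`. -/
def Represents {n : ℕ} (P : MvPolynomial (Fin n) F) (f : (Fin n → F) → F) : Prop :=
  ∀ x, MvPolynomial.eval x P = f x

/-- Degree of a polynomial function: total degree of its (unique) reduced representative. -/
noncomputable def degF {n : ℕ} (f : (Fin n → F) → F) : ℕ :=
  sInf {d | ∃ P : MvPolynomial (Fin n) F, ReducedPoly F P ∧ Represents F P f ∧ P.totalDegree = d}

/-- `f` is a form (homogeneous polynomial function) of degree `d ≥ 1`. -/
def IsFormOfDegree {n : ℕ} (f : (Fin n → F) → F) (d : ℕ) : Prop :=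
  0 < d ∧ ∃ P : MvPolynomial (Fin n) F, P ≠ 0 ∧ ReducedPoly F P ∧
    P.IsHomogeneous d ∧ Represents F P f

/-- `f` is a form: a homogeneous polynomial function of positive degree. -/
def IsForm {n : ℕ} (f : (Fin n → F) → F) : Prop := ∃ d, IsFormOfDegree F f d

/-- A function is non-constant. -/
def NonConstantFn {α β : Type*} (f : α → β) : Prop := ¬ ∃ c, ∀ x, f x = c

/-- A polynomial function is reducible if it is a product of two non-constant polynomial
functions. -/
def ReduciblePoly {n : ℕ} (f : (Fin n → F) → F) : Prop :=
  ∃ g h : (Fin n → F) → F, NonConstantFn g ∧ NonConstantFn h ∧ ∀ x, f x = g x * h x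

/-- Rank of a form of degree `d`: the least `r` such that the form is a sum of `r` reducible
forms of degree `d`; `∞` for `d ≤ 1`. -/
noncomputable def rkFormD {n : ℕ} (d : ℕ) (f : (Fin n → F) → F) : ℕ∞ :=
  if d ≤ 1 then ⊤ else
    sInf {r : ℕ∞ | ∃ k : ℕ, r = (k : ℕ∞) ∧ ∃ R : Fin k → (Fin n → F) → F,
      (∀ i, IsFormOfDegree F (R i) d ∧ ReduciblePoly F (R i)) ∧ ∀ x, f x = ∑ i, R i x}

/-- Rank of a general polynomial function: the rank of the highest-degree homogeneous part of
its reduced representative (`0` for constants). -/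
noncomputable def rkFun {n : ℕ} (f : (Fin n → F) → F) : ℕ∞ :=
  sInf {r : ℕ∞ | ∃ P : MvPolynomial (Fin n) F, ReducedPoly F P ∧ Represents F P f ∧
    r = if P.totalDegree = 0 then 0 else
      rkFormD F P.totalDegree
        (fun x => MvPolynomial.eval x ((MvPolynomial.homogeneousComponent P.totalDegree) P))}

/-- `U_R(V)`: the span of the polynomials in `V` of rank less than `R`. -/
noncomputable def lowRankSpan {n : ℕ} (V : Submodule F ((Fin n → F) → F)) (R : ℕ) :
    Submodule F ((Fin n → F) → F) :=
  Submodule.span F {f | f ∈ V ∧ rkFun F f < (R : ℕ∞)}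

/-- Degree of a subspace of polynomial functions: the largest degree of any of its members. -/
noncomputable def degSub {n : ℕ} (W : Submodule F ((Fin n → F) → F)) : ℕ :=
  sSup (degF F '' (W : Set ((Fin n → F) → F)))

/-- A subspace of polynomial functions is homogeneous if it is spanned by forms. -/
def IsHomogeneousSub {n : ℕ} (W : Submodule F ((Fin n → F) → F)) : Prop :=
  ∃ S : Set ((Fin n → F) → F), (∀ f ∈ S, IsForm F f) ∧ W = Submodule.span F S

/-- `V^↑`: the top-degree homogeneous component of `V` (the subspace consisting of `0`
together with the forms in `V` of degree `deg(V)`). -/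
noncomputable def topComponent {n : ℕ} (V : Submodule F ((Fin n → F) → F)) :
    Submodule F ((Fin n → F) → F) :=
  Submodule.span F {f | f ∈ V ∧ IsFormOfDegree F f (degSub F V)}

/-- `f ∈ F[X]`: `f` is a polynomial expression in `X₁, …, X_k`. -/
def InAlg {n k : ℕ} (X : Fin k → (Fin n → F) → F) (f : (Fin n → F) → F) : Prop :=
  ∃ G : MvPolynomial (Fin k) F, ∀ x, MvPolynomial.eval (fun i => X i x) G = f x

/-- `Pr[X = y]` over a uniformly random input of `F^n`. -/
noncomputable def prEq {n k : ℕ} (X : Fin k → (Fin n → F) → F) (y : Fin k → F) : ℝ :=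
  (Nat.card {x : Fin n → F // ∀ i, X i x = y i} : ℝ) / (Fintype.card F : ℝ) ^ n

/-- `Pr[X ∈ S]` over a uniformly random input of `F^n`. -/
noncomputable def prMem {n k : ℕ} (X : Fin k → (Fin n → F) → F) (S : Set (Fin k → F)) : ℝ :=
  (Nat.card {x : Fin n → F // (fun i => X i x) ∈ S} : ℝ) / (Fintype.card F : ℝ) ^ n

/-- A tuple `X = (X₀, X₁, …, X_k)` of forms is weak `ε`-regular: `X₀` has maximal degree and
for every `y`, `|Pr[X = y] - q⁻¹ Pr[X' = y']| ≤ ε q^{-(k+1)}`, where `X' = (X₁, …, X_k)`. -/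
def WeakRegular {n k : ℕ} (ε : ℝ) (X : Fin (k + 1) → (Fin n → F) → F) : Prop :=
  (∀ i, IsForm F (X i)) ∧
  (∀ i, degF F (X i) ≤ degF F (X 0)) ∧
  ∀ y : Fin (k + 1) → F,
    |prEq F X y -
      (Fintype.card F : ℝ)⁻¹ * prEq F (fun i : Fin k => X i.succ) (fun i : Fin k => y i.succ)|
      ≤ ε / (Fintype.card F : ℝ) ^ (k + 1)

/-- The bias of a polynomial function with respect to an additive character `χ`. -/
noncomputable def biasF {n : ℕ} (χ : AddChar F ℂ) (f : (Fin n → F) → F) : ℂ :=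
  (∑ x : Fin n → F, χ (f x)) / (Fintype.card F : ℂ) ^ n

/-- A tuple of forms `X = (X₁, …, X_r)` is `t`-rank-regular: every element of `Span(X)`
outside of some strict subspace has rank at least `t · r`. -/
def RankRegular {n r : ℕ} (t : ℕ) (X : Fin r → (Fin n → F) → F) : Prop :=
  ∃ U : Submodule F ((Fin n → F) → F), U < Submodule.span F (Set.range X) ∧
    ∀ f ∈ Submodule.span F (Set.range X), f ∉ U → ((t * r : ℕ) : ℕ∞) ≤ rkFun F f

/-- `P ⊆ F[X]` is a minimal decomposition: no strict subspace of `Span(X)` spanned by forms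
generates `P`. -/
def MinimalDecomp {n m r : ℕ} (P : Fin m → (Fin n → F) → F)
    (X : Fin r → (Fin n → F) → F) : Prop :=
  (∀ i, InAlg F X (P i)) ∧
  ∀ (k : ℕ) (Y : Fin k → (Fin n → F) → F), (∀ j, IsForm F (Y j)) →
    Submodule.span F (Set.range Y) < Submodule.span F (Set.range X) →
    ¬ ∀ i, InAlg F Y (P i)

/-- Degree of a univariate polynomial function: the degree of its reduced representative
(in which the variable has degree at most `|F| - 1`). -/
noncomputable def degU (u : F → F) : ℕ :=
  sInf {d | ∃ p : Polynomial F, p.natDegree ≤ Fintype.card F - 1 ∧ (∀ x, p.eval x = u x) ∧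
    p.natDegree = d}

/-- Univariate degree of a polynomial map `P : F^n → F^m`: the minimum degree of a
non-constant univariate polynomial curve whose image is contained in the image of `P`
(`∞` if no such curve exists, e.g. for constant maps). -/
noncomputable def udeg {n m : ℕ} (P : Fin m → (Fin n → F) → F) : ℕ∞ :=
  sInf {d : ℕ∞ | ∃ U : Fin m → F → F,
    NonConstantFn (fun t => fun i => U i t) ∧
    Set.range (fun t => fun i => U i t) ⊆ Set.range (fun x => fun i => P i x) ∧
    d = ((Finset.univ.sup fun i => degU F (U i) : ℕ) : ℕ∞)}

/-- Univariate degree of a single polynomial function `P : F^n → F`. -/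
noncomputable def udeg1 {n : ℕ} (f : (Fin n → F) → F) : ℕ∞ :=
  sInf {d : ℕ∞ | ∃ u : F → F, NonConstantFn u ∧ Set.range u ⊆ Set.range f ∧
    d = ((degU F u : ℕ) : ℕ∞)}

/-- `f` is `t`-reducible: a product of polynomial functions each of degree at most `t`. -/
def TReducible {n : ℕ} (t : ℝ) (f : (Fin n → F) → F) : Prop :=
  ∃ (s : ℕ) (g : Fin s → (Fin n → F) → F), (∀ j, (degF F (g j) : ℝ) ≤ t) ∧
    ∀ x, f x = ∏ j, g j x

/-- The line in `F^(k+1)` through `z` in direction `e₁`. -/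
def lineE1 {k : ℕ} (z : Fin (k + 1) → F) : Set (Fin (k + 1) → F) :=
  {y | ∃ t : F, y = t • (Pi.single (0 : Fin (k + 1)) (1 : F) : Fin (k + 1) → F) + z}



section Aux
set_option linter.unusedSectionVars false
variable {n : ℕ}

lemma reduced_iff (P : MvPolynomial (Fin n) F) :
    ReducedPoly F P ↔ P ∈ restrictDegree (Fin n) F (Fintype.card F - 1) := by
  simp only [ReducedPoly, mem_restrictDegree, degreeOf_le_iff]
  exact ⟨fun h s hs i => h i s hs, fun h i s hs => h s hs i⟩

lemma exists_rep (f : (Fin n → F) → F) : ∃ P, ReducedPoly F P ∧ Represents F P f := by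
  have h := map_restrict_dom_evalₗ F (Fin n)
  have hf : f ∈ (restrictDegree (Fin n) F (Fintype.card F - 1)).map (evalₗ F (Fin n)) := by
    rw [h]; trivial
  obtain ⟨P, hP, hPf⟩ := hf
  exact ⟨P, (reduced_iff F P).2 hP, fun x => by simp [← hPf]⟩

lemma rep_unique {P Q : MvPolynomial (Fin n) F} {f : (Fin n → F) → F}
    (hP : ReducedPoly F P) (hQ : ReducedPoly F Q)
    (hPf : Represents F P f) (hQf : Represents F Q f) : P = Q := by
  have : P - Q = 0 := by
    apply MvPolynomial.eq_zero_of_eval_eq_zero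
    · intro v; simp [hPf v, hQf v]
    · exact sub_mem ((reduced_iff F P).1 hP) ((reduced_iff F Q).1 hQ)
  exact sub_eq_zero.mp this

noncomputable def rep (f : (Fin n → F) → F) : MvPolynomial (Fin n) F :=
  (exists_rep F f).choose

lemma rep_reduced (f : (Fin n → F) → F) : ReducedPoly F (rep F f) :=
  (exists_rep F f).choose_spec.1

lemma rep_represents (f : (Fin n → F) → F) : Represents F (rep F f) f :=
  (exists_rep F f).choose_spec.2

lemma rep_eq {P : MvPolynomial (Fin n) F} {f : (Fin n → F) → F}
    (hP : ReducedPoly F P) (hPf : Represents F P f) : rep F f = P :=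
  rep_unique F (rep_reduced F f) hP (rep_represents F f) hPf

lemma rep_inj {f g : (Fin n → F) → F} (h : rep F f = rep F g) : f = g := by
  funext x
  rw [← rep_represents F f x, ← rep_represents F g x, h]

lemma rep_zero : rep F (0 : (Fin n → F) → F) = 0 :=
  rep_eq F (fun i => by simp [degreeOf_zero]) (fun x => by simp)

lemma rep_add (f g : (Fin n → F) → F) : rep F (f + g) = rep F f + rep F g :=
  rep_eq F ((reduced_iff F _).2 (add_mem ((reduced_iff F _).1 (rep_reduced F f))
      ((reduced_iff F _).1 (rep_reduced F g))))
    (fun x => by simp [rep_represents F f x, rep_represents F g x])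

lemma rep_smul (c : F) (f : (Fin n → F) → F) : rep F (c • f) = c • rep F f :=
  rep_eq F ((reduced_iff F _).2 (Submodule.smul_mem _ c ((reduced_iff F _).1 (rep_reduced F f))))
    (fun x => by simp [MvPolynomial.smul_eval, rep_represents F f x])

lemma rep_sub (f g : (Fin n → F) → F) : rep F (f - g) = rep F f - rep F g :=
  rep_eq F ((reduced_iff F _).2 (sub_mem ((reduced_iff F _).1 (rep_reduced F f))
      ((reduced_iff F _).1 (rep_reduced F g))))
    (fun x => by simp [rep_represents F f x, rep_represents F g x])

lemma degF_eq (f : (Fin n → F) → F) : degF F f = (rep F f).totalDegree := by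
  have hset : {d | ∃ P : MvPolynomial (Fin n) F,
      ReducedPoly F P ∧ Represents F P f ∧ P.totalDegree = d} = {(rep F f).totalDegree} := by
    ext d
    constructor
    · rintro ⟨P, h1, h2, rfl⟩
      simp [rep_eq F h1 h2]
    · rintro rfl
      exact ⟨rep F f, rep_reduced F f, rep_represents F f, rfl⟩
  rw [degF, hset, csInf_singleton]

lemma degF_zero : degF F (0 : (Fin n → F) → F) = 0 := by
  rw [degF_eq, rep_zero]; simp

lemma degF_le_bound (f : (Fin n → F) → F) : degF F f ≤ n * (Fintype.card F - 1) := by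
  rw [degF_eq, totalDegree]
  apply Finset.sup_le
  intro s hs
  have h1 : s.sum (fun _ e => e) = ∑ i ∈ s.support, s i := rfl
  rw [h1]
  calc ∑ i ∈ s.support, s i ≤ ∑ _i ∈ s.support, (Fintype.card F - 1) := by
        apply Finset.sum_le_sum
        intro i _
        exact degreeOf_le_iff.mp (rep_reduced F f i) s hs
    _ = s.support.card * (Fintype.card F - 1) := by
        rw [Finset.sum_const, smul_eq_mul]
    _ ≤ n * (Fintype.card F - 1) := by
        apply Nat.mul_le_mul_right
        simpa using Finset.card_le_card (Finset.subset_univ s.support)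

lemma rkFun_eq (f : (Fin n → F) → F) : rkFun F f =
    if (rep F f).totalDegree = 0 then 0 else
      rkFormD F (rep F f).totalDegree
        (fun x => MvPolynomial.eval x
          ((MvPolynomial.homogeneousComponent (rep F f).totalDegree) (rep F f))) := by
  have hset : {r : ℕ∞ | ∃ P : MvPolynomial (Fin n) F, ReducedPoly F P ∧ Represents F P f ∧
      r = if P.totalDegree = 0 then 0 else
        rkFormD F P.totalDegree
          (fun x => MvPolynomial.eval x ((MvPolynomial.homogeneousComponent P.totalDegree) P))}
      = {if (rep F f).totalDegree = 0 then 0 else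
          rkFormD F (rep F f).totalDegree
            (fun x => MvPolynomial.eval x
              ((MvPolynomial.homogeneousComponent (rep F f).totalDegree) (rep F f)))} := by
    ext r
    constructor
    · rintro ⟨P, h1, h2, rfl⟩
      simp [rep_eq F h1 h2]
    · rintro rfl
      exact ⟨rep F f, rep_reduced F f, rep_represents F f, rfl⟩
  rw [rkFun, hset, csInf_singleton]

lemma reduced_hC {P : MvPolynomial (Fin n) F} (d : ℕ) (h : ReducedPoly F P) :
    ReducedPoly F (homogeneousComponent d P) := by
  rw [reduced_iff, mem_restrictDegree] at h ⊢
  intro s hs i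
  apply h s
  rw [mem_support_iff] at hs ⊢
  rw [coeff_homogeneousComponent] at hs
  intro h0
  rw [h0] at hs
  simp at hs

/-- The degree-`d` homogeneous component of a polynomial function. -/
noncomputable def compF (d : ℕ) (f : (Fin n → F) → F) : (Fin n → F) → F :=
  fun x => MvPolynomial.eval x (homogeneousComponent d (rep F f))

lemma rep_compF (d : ℕ) (f : (Fin n → F) → F) :
    rep F (compF F d f) = homogeneousComponent d (rep F f) :=
  rep_eq F (reduced_hC F d (rep_reduced F f)) (fun _ => rfl)

lemma compF_add (d : ℕ) (f g : (Fin n → F) → F) :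
    compF F d (f + g) = compF F d f + compF F d g := by
  funext x
  simp [compF, rep_add, map_add]

lemma compF_smul (d : ℕ) (c : F) (f : (Fin n → F) → F) :
    compF F d (c • f) = c • compF F d f := by
  funext x
  simp [compF, rep_smul, MvPolynomial.smul_eval]

/-- `compF` as a linear map. -/
noncomputable def compL (d : ℕ) : ((Fin n → F) → F) →ₗ[F] ((Fin n → F) → F) where
  toFun := compF F d
  map_add' := compF_add F d
  map_smul' := compF_smul F d

lemma isFormOfDegree_iff (f : (Fin n → F) → F) (d : ℕ) :
    IsFormOfDegree F f d ↔ 0 < d ∧ rep F f ≠ 0 ∧ (rep F f).IsHomogeneous d := by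
  constructor
  · rintro ⟨hd, P, hP0, hPr, hPh, hPf⟩
    rw [rep_eq F hPr hPf]
    exact ⟨hd, hP0, hPh⟩
  · rintro ⟨hd, h0, hh⟩
    exact ⟨hd, rep F f, h0, rep_reduced F f, hh, rep_represents F f⟩

lemma degF_of_form {f : (Fin n → F) → F} {d : ℕ} (h : IsFormOfDegree F f d) :
    degF F f = d := by
  obtain ⟨hd, h0, hh⟩ := (isFormOfDegree_iff F f d).1 h
  rw [degF_eq]
  exact hh.totalDegree h0

lemma hC_totalDegree_ne_zero {P : MvPolynomial (Fin n) F} (h : P ≠ 0) :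
    homogeneousComponent P.totalDegree P ≠ 0 := by
  obtain ⟨d, hd, hdeg⟩ := P.support.exists_mem_eq_sup
    (Finset.nonempty_iff_ne_empty.mpr (mt MvPolynomial.support_eq_empty.mp h)) (fun s => s.sum fun _ e => e)
  intro h0
  have hc : coeff d (homogeneousComponent P.totalDegree P) = coeff d P := by
    rw [coeff_homogeneousComponent, if_pos]
    show Finsupp.degree d = P.totalDegree
    rw [totalDegree, hdeg]
    rfl
  rw [h0] at hc
  exact (mem_support_iff.mp hd) hc.symm

lemma compF_of_form {f : (Fin n → F) → F} {e : ℕ} (h : IsFormOfDegree F f e) (d : ℕ) :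
    compF F d f = if d = e then f else 0 := by
  obtain ⟨hd, h0, hh⟩ := (isFormOfDegree_iff F f e).1 h
  have hmem : rep F f ∈ homogeneousSubmodule (Fin n) F e := hh
  by_cases hde : d = e
  · rw [if_pos hde]
    apply rep_inj F
    rw [rep_compF, homogeneousComponent_of_mem hmem, if_pos hde]
  · rw [if_neg hde]
    apply rep_inj F
    rw [rep_compF, rep_zero, homogeneousComponent_of_mem hmem, if_neg hde]

lemma compF_zero_of_lt {f : (Fin n → F) → F} {d : ℕ} (h : degF F f < d) :
    compF F d f = 0 := by
  apply rep_inj F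
  rw [rep_compF, rep_zero, homogeneousComponent_eq_zero]
  rwa [degF_eq] at h

lemma compF_idem (d : ℕ) (f : (Fin n → F) → F) : compF F d (compF F d f) = compF F d f := by
  apply rep_inj F
  have hmem : homogeneousComponent d (rep F f) ∈ homogeneousSubmodule (Fin n) F d :=
    homogeneousComponent_isHomogeneous d (rep F f)
  rw [rep_compF, rep_compF, homogeneousComponent_of_mem hmem, if_pos rfl]

lemma compF_ne_zero_of_deg {f : (Fin n → F) → F} (h : f ≠ 0) :
    compF F (degF F f) f ≠ 0 := by
  intro h0
  have h1 : rep F f ≠ 0 := fun hr => h (rep_inj F (by rw [hr, rep_zero]))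
  have := hC_totalDegree_ne_zero F h1
  apply this
  have h2 := rep_compF F (degF F f) f
  rw [h0, rep_zero, degF_eq] at h2
  exact h2.symm

end Aux


section Aux2
set_option linter.unusedSectionVars false
variable {n : ℕ}

lemma compF_sub (d : ℕ) (f g : (Fin n → F) → F) :
    compF F d (f - g) = compF F d f - compF F d g := by
  funext x
  simp [compF, rep_sub, map_sub]

lemma rkFun_top (f : (Fin n → F) → F) (hd : degF F f ≠ 0) :
    rkFun F (compF F (degF F f) f) = rkFun F f := by
  have hne : rep F f ≠ 0 := by
    intro h
    apply hd
    rw [degF_eq, h]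
    simp
  have htd : (rep F f).totalDegree = degF F f := (degF_eq F f).symm
  have hrep : rep F (compF F (degF F f) f) = homogeneousComponent (degF F f) (rep F f) :=
    rep_compF F _ f
  have hCne : homogeneousComponent (degF F f) (rep F f) ≠ 0 := by
    rw [← htd]
    exact hC_totalDegree_ne_zero F hne
  have hhom : (homogeneousComponent (degF F f) (rep F f)).IsHomogeneous (degF F f) :=
    homogeneousComponent_isHomogeneous _ _
  have hmem : homogeneousComponent (degF F f) (rep F f)
      ∈ homogeneousSubmodule (Fin n) F (degF F f) := hhom
  have htd2 : (rep F (compF F (degF F f) f)).totalDegree = degF F f := by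
    rw [hrep]
    exact hhom.totalDegree hCne
  rw [rkFun_eq F f, rkFun_eq F (compF F (degF F f) f), htd, htd2, if_neg hd, if_neg hd]
  congr 1
  funext x
  rw [hrep, homogeneousComponent_of_mem hmem, if_pos rfl]

lemma rkFun_add_lower {h g : (Fin n → F) → F} {D : ℕ}
    (hform : IsFormOfDegree F h D) (hg : degF F g < D) :
    rkFun F (h + g) = rkFun F h := by
  obtain ⟨hD, h0, hhom⟩ := (isFormOfDegree_iff F h D).1 hform
  have hmem : rep F h ∈ homogeneousSubmodule (Fin n) F D := hhom
  have htdh : (rep F h).totalDegree = D := hhom.totalDegree h0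
  have htdg : (rep F g).totalDegree < D := by rwa [degF_eq] at hg
  have hradd : rep F (h + g) = rep F h + rep F g := rep_add F h g
  have htd : (rep F (h + g)).totalDegree = D := by
    rw [hradd, totalDegree_add_eq_left_of_totalDegree_lt (by omega), htdh]
  have hDne : D ≠ 0 := by omega
  have hCsum : homogeneousComponent D (rep F (h + g)) = rep F h := by
    rw [hradd, map_add, homogeneousComponent_of_mem hmem, if_pos rfl,
      homogeneousComponent_eq_zero _ _ htdg, add_zero]
  rw [rkFun_eq F (h + g), rkFun_eq F h, htd, htdh, if_neg hDne, if_neg hDne]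
  congr 1
  funext x
  rw [hCsum, homogeneousComponent_of_mem hmem, if_pos rfl]

lemma bddAbove_degF_image (V : Submodule F ((Fin n → F) → F)) :
    BddAbove (degF F '' (V : Set ((Fin n → F) → F))) := by
  refine ⟨n * (Fintype.card F - 1), ?_⟩
  rintro d ⟨f, _, rfl⟩
  exact degF_le_bound F f

lemma degF_le_degSub {V : Submodule F ((Fin n → F) → F)} {f : (Fin n → F) → F}
    (hf : f ∈ V) : degF F f ≤ degSub F V :=
  le_csSup (bddAbove_degF_image F V) ⟨f, hf, rfl⟩

lemma exists_mem_degF_eq (V : Submodule F ((Fin n → F) → F)) :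
    ∃ f ∈ V, degF F f = degSub F V := by
  have hne : (degF F '' (V : Set ((Fin n → F) → F))).Nonempty :=
    ⟨degF F 0, 0, V.zero_mem, rfl⟩
  have := Nat.sSup_mem hne (bddAbove_degF_image F V)
  obtain ⟨f, hf, hfd⟩ := this
  exact ⟨f, hf, hfd⟩

lemma compF_mem {V : Submodule F ((Fin n → F) → F)} (hV : IsHomogeneousSub F V)
    (d : ℕ) {f : (Fin n → F) → F} (hf : f ∈ V) : compF F d f ∈ V := by
  obtain ⟨S, hS, rfl⟩ := hV
  have hle : Submodule.span F S ≤ Submodule.comap (compL F d) (Submodule.span F S) := by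
    rw [Submodule.span_le]
    intro s hs
    rw [SetLike.mem_coe, Submodule.mem_comap]
    show compF F d s ∈ Submodule.span F S
    obtain ⟨e, he⟩ := hS s hs
    rw [compF_of_form F he d]
    split
    · exact Submodule.subset_span hs
    · exact zero_mem _
  exact hle hf

lemma one_le_degSub {V : Submodule F ((Fin n → F) → F)} (hV : IsHomogeneousSub F V)
    (hbot : V ≠ ⊥) : 1 ≤ degSub F V := by
  obtain ⟨S, hS, rfl⟩ := hV
  have hex : ∃ s ∈ S, s ≠ (0 : (Fin n → F) → F) := by
    by_contra hc
    push_neg at hc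
    apply hbot
    rw [← le_bot_iff, Submodule.span_le]
    intro s hs
    rw [SetLike.mem_coe, Submodule.mem_bot]
    exact hc s hs
  obtain ⟨s, hs, hs0⟩ := hex
  obtain ⟨e, he⟩ := hS s hs
  have h1 : degF F s = e := degF_of_form F he
  have h2 : degF F s ≤ degSub F (Submodule.span F S) :=
    degF_le_degSub F (Submodule.subset_span hs)
  have := he.1
  omega

lemma topComponent_le (V : Submodule F ((Fin n → F) → F)) : topComponent F V ≤ V := by
  rw [topComponent, Submodule.span_le]
  rintro f ⟨hf, _⟩
  exact hf

lemma compF_fix_of_mem_topComponent {V : Submodule F ((Fin n → F) → F)}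
    {f : (Fin n → F) → F} (hf : f ∈ topComponent F V) :
    compF F (degSub F V) f = f := by
  have hle : topComponent F V ≤ LinearMap.ker (compL F (degSub F V) - LinearMap.id) := by
    rw [topComponent, Submodule.span_le]
    rintro g ⟨_, hform⟩
    rw [SetLike.mem_coe, LinearMap.mem_ker, LinearMap.sub_apply, LinearMap.id_apply]
    show compF F (degSub F V) g - g = 0
    rw [compF_of_form F hform (degSub F V), if_pos rfl, sub_self]
  have := hle hf
  rw [LinearMap.mem_ker, LinearMap.sub_apply, LinearMap.id_apply] at this
  have h2 : compF F (degSub F V) f - f = 0 := this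
  rw [sub_eq_zero] at h2
  exact h2

lemma isFormOfDegree_of_fix {f : (Fin n → F) → F} {D : ℕ}
    (hfix : compF F D f = f) (h0 : f ≠ 0) (hD : 1 ≤ D) : IsFormOfDegree F f D := by
  rw [isFormOfDegree_iff]
  have hrep : rep F f = homogeneousComponent D (rep F f) := by
    conv_lhs => rw [← hfix]
    exact rep_compF F D f
  refine ⟨hD, ?_, ?_⟩
  · intro h
    exact h0 (rep_inj F (by rw [h, rep_zero]))
  · rw [hrep]
    exact homogeneousComponent_isHomogeneous D (rep F f)

lemma compF_mem_topComponent {V : Submodule F ((Fin n → F) → F)} (hV : IsHomogeneousSub F V)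
    (hD : 1 ≤ degSub F V) {f : (Fin n → F) → F} (hf : f ∈ V) :
    compF F (degSub F V) f ∈ topComponent F V := by
  by_cases h0 : compF F (degSub F V) f = 0
  · rw [h0]; exact zero_mem _
  · apply Submodule.subset_span
    exact ⟨compF_mem F hV _ hf,
      isFormOfDegree_of_fix F (compF_idem F _ f) h0 hD⟩

lemma lowRankSpan_le (V : Submodule F ((Fin n → F) → F)) (R : ℕ) :
    lowRankSpan F V R ≤ V := by
  rw [lowRankSpan, Submodule.span_le]
  rintro f ⟨hf, _⟩
  exact hf

end Aux2

/-- For a homogeneous subspace `V`, one has `U_R(V) = V` if and only if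
`U_R(V^↑) = V^↑`, where `V^↑` is the top-degree homogeneous component of `V`. -/
theorem lowRankSpan_eq_iff_topComponent (n R : ℕ) (V : Submodule F ((Fin n → F) → F))
    (hV : IsHomogeneousSub F V) :
    lowRankSpan F V R = V ↔ lowRankSpan F (topComponent F V) R = topComponent F V := by
  by_cases hbot : V = ⊥
  · subst hbot
    have h1 : lowRankSpan F (⊥ : Submodule F ((Fin n → F) → F)) R = ⊥ :=
      le_antisymm (lowRankSpan_le F ⊥ R) bot_le
    have h2 : topComponent F (⊥ : Submodule F ((Fin n → F) → F)) = ⊥ :=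
      le_antisymm (topComponent_le F ⊥) bot_le
    simp [h1, h2]
  · have hD1 : 1 ≤ degSub F V := one_le_degSub F hV hbot
    have hDne : degSub F V ≠ 0 := by omega
    constructor
    · intro hUR
      apply le_antisymm (lowRankSpan_le F _ R)
      intro f hf
      have hfix : compF F (degSub F V) f = f := compF_fix_of_mem_topComponent F hf
      have hfV : f ∈ lowRankSpan F V R := by
        rw [hUR]
        exact topComponent_le F V hf
      have hmap : lowRankSpan F V R ≤
          Submodule.comap (compL F (degSub F V)) (lowRankSpan F (topComponent F V) R) := by
        rw [lowRankSpan, Submodule.span_le]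
        rintro g ⟨hgV, hgrk⟩
        rw [SetLike.mem_coe, Submodule.mem_comap]
        show compF F (degSub F V) g ∈ lowRankSpan F (topComponent F V) R
        by_cases hdeg : degF F g = degSub F V
        · have hrk : rkFun F (compF F (degSub F V) g) = rkFun F g := by
            rw [← hdeg]
            exact rkFun_top F g (by omega)
          apply Submodule.subset_span
          exact ⟨compF_mem_topComponent F hV hD1 hgV, by rw [hrk]; exact hgrk⟩
        · have hlt : degF F g < degSub F V :=
            lt_of_le_of_ne (degF_le_degSub F hgV) hdeg
          rw [compF_zero_of_lt F hlt]
          exact zero_mem _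
      have hm := hmap hfV
      rw [Submodule.mem_comap] at hm
      rwa [show (compL F (degSub F V)) f = f from hfix] at hm
    · intro hUR
      apply le_antisymm (lowRankSpan_le F V R)
      have hTbot : topComponent F V ≠ ⊥ := by
        obtain ⟨f0, hf0V, hf0d⟩ := exists_mem_degF_eq F V
        have hf0ne : f0 ≠ 0 := by
          intro h
          rw [h, degF_zero] at hf0d
          omega
        have hcne := compF_ne_zero_of_deg F hf0ne
        rw [hf0d] at hcne
        intro hTb
        have hmem : compF F (degSub F V) f0 ∈ topComponent F V :=
          compF_mem_topComponent F hV hD1 hf0V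
        rw [hTb, Submodule.mem_bot] at hmem
        exact hcne hmem
      have hex : ∃ h₀, h₀ ∈ topComponent F V ∧ rkFun F h₀ < (R : ℕ∞) ∧ h₀ ≠ 0 := by
        by_contra hc
        push_neg at hc
        apply hTbot
        rw [← hUR, lowRankSpan, ← le_bot_iff, Submodule.span_le]
        rintro g ⟨hgT, hgrk⟩
        rw [SetLike.mem_coe, Submodule.mem_bot]
        exact hc g hgT hgrk
      obtain ⟨h₀, hh₀T, hh₀rk, hh₀0⟩ := hex
      have hh₀fix : compF F (degSub F V) h₀ = h₀ := compF_fix_of_mem_topComponent F hh₀T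
      have hh₀form : IsFormOfDegree F h₀ (degSub F V) :=
        isFormOfDegree_of_fix F hh₀fix hh₀0 hD1
      have hTle : topComponent F V ≤ lowRankSpan F V R := by
        rw [← hUR, lowRankSpan, Submodule.span_le]
        rintro g ⟨hgT, hgrk⟩
        exact Submodule.subset_span ⟨topComponent_le F V hgT, hgrk⟩
      intro f hfV
      have hf'V : f - compF F (degSub F V) f ∈ V := sub_mem hfV (compF_mem F hV _ hfV)
      have hf'lt : degF F (f - compF F (degSub F V) f) < degSub F V := by
        by_cases h0 : f - compF F (degSub F V) f = 0
        · rw [h0, degF_zero]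
          omega
        · refine lt_of_le_of_ne (degF_le_degSub F hf'V) ?_
          intro hEq
          apply compF_ne_zero_of_deg F h0
          rw [hEq, compF_sub, compF_idem, sub_self]
      have hkey : f = ((f - compF F (degSub F V) f) + h₀) + (compF F (degSub F V) f - h₀) := by
        abel
      rw [hkey]
      apply add_mem
      · apply Submodule.subset_span
        refine ⟨add_mem hf'V (topComponent_le F V hh₀T), ?_⟩
        have hrk : rkFun F ((f - compF F (degSub F V) f) + h₀) = rkFun F h₀ := by
          rw [add_comm]
          exact rkFun_add_lower F hh₀form hf'lt
        rw [hrk]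
        exact hh₀rk
      · exact hTle (sub_mem (compF_mem_topComponent F hV hD1 hfV) hh₀T)

end PaperDefs
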